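/- For every positive integer m, every real number a, and every natural number n, the Bernoulli polynomial evaluated at -a/m satisfies the explicit formula B_n(-a/m) = Σ_{k=0}^{n} k! · W̃_{m,a}(n,k) · (-1)^k / (m^{n-k} · (k+1)). -/

import Mathlib

open Finset MeasureTheory

/-- Noncentral Whitney numbers of the second kind:
`W̃_{m,a}(n,k) = (1/(m^k k!)) Σ_{j=0}^{k} (-1)^{k-j} C(k,j) (m j - a)^n`. -/
noncomputable def ncWhitney (m : ℕ) (a : ℝ) (n k : ℕ) : ℝ :=
  (1 / ((m : ℝ) ^ k * (Nat.factorial k : ℝ))) *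
    ∑ j ∈ Finset.range (k + 1),
      (-1 : ℝ) ^ (k - j) * (Nat.choose k j : ℝ) * ((m : ℝ) * (j : ℝ) - a) ^ n

/-- Noncentral Tanny-Dowling polynomials:
`F̃_{m,a}(n;x) = Σ_{k=0}^{n} k! W̃_{m,a}(n,k) x^k`. -/
noncomputable def ncTannyDowling (m : ℕ) (a : ℝ) (n : ℕ) (x : ℝ) : ℝ :=
  ∑ k ∈ Finset.range (n + 1), (Nat.factorial k : ℝ) * ncWhitney m a n k * x ^ k

/-- Noncentral Dowling polynomials:
`D̃_{m,a}(n;x) = Σ_{k=0}^{n} W̃_{m,a}(n,k) x^k`. -/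
noncomputable def ncDowling (m : ℕ) (a : ℝ) (n : ℕ) (x : ℝ) : ℝ :=
  ∑ k ∈ Finset.range (n + 1), ncWhitney m a n k * x ^ k


/-- `AS i k = Σ_{j=0}^k (-1)^j C(k,j) j^i`. -/
noncomputable def AS (i k : ℕ) : ℝ :=
  ∑ j ∈ Finset.range (k+1), (-1:ℝ)^j * (k.choose j : ℝ) * (j:ℝ)^i

lemma alt_pascal (f : ℕ → ℝ) (k : ℕ) :
    ∑ j ∈ Finset.range (k+2), (-1:ℝ)^j * ((k+1).choose j : ℝ) * f j
      = ∑ j ∈ Finset.range (k+1), (-1:ℝ)^j * (k.choose j : ℝ) * f j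
        - ∑ j ∈ Finset.range (k+1), (-1:ℝ)^j * (k.choose j : ℝ) * f (j+1) := by
  have h1 : ∑ j ∈ Finset.range (k+2), (-1:ℝ)^j * ((k+1).choose j : ℝ) * f j
      = (∑ j ∈ Finset.range (k+1), (-1:ℝ)^(j+1) * ((k+1).choose (j+1) : ℝ) * f (j+1))
        + f 0 := by
    rw [Finset.sum_range_succ']; simp
  have h2 : ∀ j, ((k+1).choose (j+1) : ℝ) = (k.choose j : ℝ) + (k.choose (j+1) : ℝ) := by
    intro j; rw [Nat.choose_succ_succ]; push_cast; ring
  have h3 : (∑ j ∈ Finset.range (k+1), (-1:ℝ)^(j+1) * (k.choose (j+1) : ℝ) * f (j+1))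
      = ∑ j ∈ Finset.range (k+1), (-1:ℝ)^j * (k.choose j : ℝ) * f j - f 0 := by
    have h4 : ∑ j ∈ Finset.range (k+2), (-1:ℝ)^j * (k.choose j : ℝ) * f j
        = (∑ j ∈ Finset.range (k+1), (-1:ℝ)^(j+1) * (k.choose (j+1) : ℝ) * f (j+1)) + f 0 := by
      rw [Finset.sum_range_succ']; simp
    have h5 : ∑ j ∈ Finset.range (k+2), (-1:ℝ)^j * (k.choose j : ℝ) * f j
        = ∑ j ∈ Finset.range (k+1), (-1:ℝ)^j * (k.choose j : ℝ) * f j := by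
      rw [Finset.sum_range_succ]; simp
    rw [h5] at h4; linarith
  calc ∑ j ∈ Finset.range (k+2), (-1:ℝ)^j * ((k+1).choose j : ℝ) * f j
      = (∑ j ∈ Finset.range (k+1), ((-1:ℝ)^(j+1) * (k.choose j : ℝ) * f (j+1)
          + (-1:ℝ)^(j+1) * (k.choose (j+1) : ℝ) * f (j+1))) + f 0 := by
        rw [h1]; congr 1; apply Finset.sum_congr rfl; intro j _; rw [h2]; ring
    _ = (∑ j ∈ Finset.range (k+1), (-1:ℝ)^(j+1) * (k.choose j : ℝ) * f (j+1))
        + (∑ j ∈ Finset.range (k+1), (-1:ℝ)^(j+1) * (k.choose (j+1) : ℝ) * f (j+1)) + f 0 := by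
        rw [Finset.sum_add_distrib]
    _ = _ := by
        rw [h3]
        have : ∀ j ∈ Finset.range (k+1), (-1:ℝ)^(j+1) * (k.choose j : ℝ) * f (j+1)
            = -((-1:ℝ)^j * (k.choose j : ℝ) * f (j+1)) := by intro j _; ring
        rw [Finset.sum_congr rfl this, Finset.sum_neg_distrib]
        ring

lemma AS_vanish : ∀ k : ℕ, ∀ i < k, AS i k = 0 := by
  intro k
  induction k with
  | zero => intro i hi; omega
  | succ k ih =>
    intro i hi
    have key : AS i (k+1) = AS i k - ∑ l ∈ Finset.range (i+1),
        (i.choose l : ℝ) * AS l k := by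
      have hp := alt_pascal (fun j => (j:ℝ)^i) k
      have hshift : ∀ j : ℕ, ((j+1 : ℕ) : ℝ)^i
          = ∑ l ∈ Finset.range (i+1), (i.choose l : ℝ) * (j:ℝ)^l := by
        intro j
        push_cast
        rw [add_pow]
        apply Finset.sum_congr rfl
        intro l _
        simp [mul_comm]
      have : ∑ j ∈ Finset.range (k+1), (-1:ℝ)^j * (k.choose j : ℝ) * ((j+1:ℕ):ℝ)^i
          = ∑ l ∈ Finset.range (i+1), (i.choose l : ℝ) * AS l k := by
        simp only [hshift, Finset.mul_sum, AS]
        rw [Finset.sum_comm]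
        apply Finset.sum_congr rfl
        intro l _
        apply Finset.sum_congr rfl
        intro j _
        ring
      rw [this] at hp
      simpa [AS] using hp
    rcases Nat.lt_or_ge i k with h | h
    · rw [key, ih i h]
      have : ∀ l ∈ Finset.range (i+1), (i.choose l : ℝ) * AS l k = 0 := by
        intro l hl
        rw [ih l (by simp at hl; omega)]
        ring
      rw [Finset.sum_eq_zero this]
      ring
    · have hik : i = k := by omega
      subst hik
      rw [key, Finset.sum_range_succ, Nat.choose_self]
      have : ∀ l ∈ Finset.range i, (i.choose l : ℝ) * AS l i = 0 := by
        intro l hl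
        rw [ih l (by simpa using hl)]
        ring
      rw [Finset.sum_eq_zero this]
      ring

lemma sum_range_choose_nat (N j : ℕ) :
    ∑ k ∈ Finset.range N, k.choose j = N.choose (j+1) := by
  induction N with
  | zero => simp
  | succ N ih => rw [Finset.sum_range_succ, ih, Nat.choose_succ_succ', Nat.add_comm]

/-- `bn i = Σ_{k=0}^i (1/(k+1)) AS i k`. -/
noncomputable def bn (i : ℕ) : ℝ := ∑ k ∈ Finset.range (i+1), (1/((k:ℝ)+1)) * AS i k

lemma bn_extend (i N : ℕ) (h : i < N) :
    bn i = ∑ k ∈ Finset.range N, (1/((k:ℝ)+1)) * AS i k := by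
  rw [bn]
  apply Finset.sum_subset
  · intro k hk; simp at hk ⊢; omega
  · intro k _ hk
    simp only [Finset.mem_range] at hk
    rw [AS_vanish k i (by omega)]
    ring

lemma bn_recurrence (N : ℕ) (hN : 1 ≤ N) :
    ∑ i ∈ Finset.range N, (N.choose i : ℝ) * bn i = if N = 1 then 1 else 0 := by
  -- Step 1-2: extend and swap
  have step1 : ∑ i ∈ Finset.range N, (N.choose i : ℝ) * bn i
      = ∑ k ∈ Finset.range N, (1/((k:ℝ)+1)) *
          ∑ j ∈ Finset.range (k+1), (-1:ℝ)^j * (k.choose j : ℝ) *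
            ∑ i ∈ Finset.range N, (N.choose i : ℝ) * (j:ℝ)^i := by
    have : ∀ i ∈ Finset.range N, (N.choose i : ℝ) * bn i
        = ∑ k ∈ Finset.range N, (1/((k:ℝ)+1)) * ((N.choose i : ℝ) * AS i k) := by
      intro i hi
      rw [bn_extend i N (Finset.mem_range.mp hi), Finset.mul_sum]
      apply Finset.sum_congr rfl; intro k _; ring
    rw [Finset.sum_congr rfl this, Finset.sum_comm]
    apply Finset.sum_congr rfl
    intro k _
    rw [Finset.mul_sum]
    have l1 : ∀ i ∈ Finset.range N, (1/((k:ℝ)+1)) * ((N.choose i : ℝ) * AS i k)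
        = ∑ j ∈ Finset.range (k+1),
            (1/((k:ℝ)+1)) * ((-1:ℝ)^j * (k.choose j : ℝ) * ((N.choose i:ℝ) * (j:ℝ)^i)) := by
      intro i _
      simp only [AS, Finset.mul_sum]
      apply Finset.sum_congr rfl; intro j _; ring
    have r1 : ∀ j ∈ Finset.range (k+1), (1/((k:ℝ)+1)) * ((-1:ℝ)^j * (k.choose j : ℝ) *
            ∑ i ∈ Finset.range N, (N.choose i : ℝ) * (j:ℝ)^i)
        = ∑ i ∈ Finset.range N,
            (1/((k:ℝ)+1)) * ((-1:ℝ)^j * (k.choose j : ℝ) * ((N.choose i:ℝ) * (j:ℝ)^i)) := by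
      intro j _
      simp only [Finset.mul_sum]
    rw [Finset.sum_congr rfl l1, Finset.sum_congr rfl r1, Finset.sum_comm]
  rw [step1]
  -- Step 3: inner geometric-binomial sum
  have step3 : ∀ j : ℕ, ∑ i ∈ Finset.range N, (N.choose i : ℝ) * (j:ℝ)^i
      = (((j:ℝ)+1))^N - (j:ℝ)^N := by
    intro j
    have h := add_pow (j:ℝ) 1 N
    simp only [one_pow, mul_one] at h
    rw [Finset.sum_range_succ, Nat.choose_self] at h
    have : ∀ i ∈ Finset.range N, (N.choose i : ℝ) * (j:ℝ)^i
        = (j:ℝ)^i * (N.choose i : ℝ) := by intro i _; ring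
    rw [Finset.sum_congr rfl this]
    push_cast at h ⊢
    linarith
  -- Step 4: apply alt_pascal
  have step4 : ∀ k : ℕ, (1/((k:ℝ)+1)) *
        ∑ j ∈ Finset.range (k+1), (-1:ℝ)^j * (k.choose j : ℝ) *
          ∑ i ∈ Finset.range N, (N.choose i : ℝ) * (j:ℝ)^i
      = -((1/((k:ℝ)+1)) * AS N (k+1)) := by
    intro k
    have hp := alt_pascal (fun j => (j:ℝ)^N) k
    have : ∑ j ∈ Finset.range (k+1), (-1:ℝ)^j * (k.choose j : ℝ) *
          ∑ i ∈ Finset.range N, (N.choose i : ℝ) * (j:ℝ)^i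
        = (∑ j ∈ Finset.range (k+1), (-1:ℝ)^j * (k.choose j : ℝ) * (((j:ℝ)+1))^N)
          - ∑ j ∈ Finset.range (k+1), (-1:ℝ)^j * (k.choose j : ℝ) * (j:ℝ)^N := by
      rw [← Finset.sum_sub_distrib]
      apply Finset.sum_congr rfl
      intro j _
      rw [step3 j]
      ring
    rw [this]
    have hc : ∀ j : ℕ, (((j:ℝ))+1)^N = (((j+1:ℕ):ℝ))^N := by intro j; push_cast; ring
    simp only [hc]
    rw [AS]
    have : (∑ j ∈ Finset.range (k+1+1), (-1:ℝ)^j * ((k+1).choose j : ℝ) * (j:ℝ)^N)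
        = (∑ j ∈ Finset.range (k+1), (-1:ℝ)^j * (k.choose j : ℝ) * (j:ℝ)^N)
          - ∑ j ∈ Finset.range (k+1), (-1:ℝ)^j * (k.choose j : ℝ) * ((j+1:ℕ):ℝ)^N := hp
    rw [this]
    ring
  rw [Finset.sum_congr rfl (fun k _ => step4 k)]
  -- Step 5
  have step5 : ∀ k : ℕ, -((1/((k:ℝ)+1)) * AS N (k+1))
      = ∑ j ∈ Finset.range (k+1), (-1:ℝ)^j * (k.choose j : ℝ) * ((j+1:ℕ):ℝ)^(N-1) := by
    intro k
    rw [AS, Finset.sum_range_succ']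
    simp only [pow_zero, Nat.choose_zero_right, Nat.cast_one, Nat.cast_zero, one_mul]
    rw [zero_pow (by omega : N ≠ 0), add_zero, Finset.mul_sum, ← Finset.sum_neg_distrib]
    apply Finset.sum_congr rfl
    intro j _
    have hN' : ((j+1:ℕ):ℝ)^N = ((j+1:ℕ):ℝ) * ((j+1:ℕ):ℝ)^(N-1) := by
      rw [← pow_succ']
      congr 1
      omega
    have hch : ((k+1).choose (j+1) : ℝ) * ((j+1:ℕ):ℝ) = ((k:ℝ)+1) * (k.choose j : ℝ) := by
      have := Nat.add_one_mul_choose_eq k j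
      have h2 : (k+1) * (k.choose j) = ((k+1).choose (j+1)) * (j+1) := this
      have := congrArg (Nat.cast : ℕ → ℝ) h2
      push_cast at this ⊢
      linarith
    have hk1 : ((k:ℝ)+1) ≠ 0 := by positivity
    push_cast at hN' hch ⊢
    field_simp
    rw [hN']
    linear_combination ((-1:ℝ)^j * ((j:ℝ)+1)^(N-1)) * hch
  rw [Finset.sum_congr rfl (fun k _ => step5 k)]
  have ext : ∀ k ∈ Finset.range N,
      (∑ j ∈ Finset.range (k+1), (-1:ℝ)^j * (k.choose j : ℝ) * ((j+1:ℕ):ℝ)^(N-1))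
      = ∑ j ∈ Finset.range N, (-1:ℝ)^j * (k.choose j : ℝ) * ((j+1:ℕ):ℝ)^(N-1) := by
    intro k hk
    apply Finset.sum_subset
    · intro j hj; simp at hj hk ⊢; omega
    · intro j _ hj
      simp only [Finset.mem_range] at hj
      rw [Nat.choose_eq_zero_of_lt (by omega)]
      simp
  rw [Finset.sum_congr rfl ext, Finset.sum_comm]
  have inner : ∀ j ∈ Finset.range N,
      (∑ k ∈ Finset.range N, (-1:ℝ)^j * (k.choose j : ℝ) * ((j+1:ℕ):ℝ)^(N-1))
      = (-1:ℝ)^j * (N.choose (j+1) : ℝ) * ((j+1:ℕ):ℝ)^(N-1) := by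
    intro j _
    rw [← Finset.sum_mul, ← Finset.mul_sum, ← Nat.cast_sum, sum_range_choose_nat]
  rw [Finset.sum_congr rfl inner]
  have hvan : AS (N-1) N = 0 := AS_vanish N (N-1) (by omega)
  rw [AS, Finset.sum_range_succ'] at hvan
  simp only [pow_zero, Nat.choose_zero_right, Nat.cast_one, Nat.cast_zero, one_mul] at hvan
  have key : ∑ j ∈ Finset.range N, (-1:ℝ)^j * (N.choose (j+1) : ℝ) * ((j+1:ℕ):ℝ)^(N-1)
      = (0:ℝ)^(N-1) := by
    have h2 : ∑ j ∈ Finset.range N, (-1:ℝ)^(j+1) * (N.choose (j+1):ℝ) * ((j+1:ℕ):ℝ)^(N-1)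
        = -∑ j ∈ Finset.range N, (-1:ℝ)^j * (N.choose (j+1):ℝ) * ((j+1:ℕ):ℝ)^(N-1) := by
      rw [← Finset.sum_neg_distrib]; apply Finset.sum_congr rfl; intro j _; ring
    rw [h2] at hvan; linarith
  rw [key]
  rcases Nat.eq_or_lt_of_le hN with h1 | h1
  · simp [← h1]
  · rw [if_neg (by omega), zero_pow (by omega : N - 1 ≠ 0)]

lemma bn_eq_bernoulli (n : ℕ) : bn n = ((bernoulli n : ℚ) : ℝ) := by
  induction n using Nat.strong_induction_on with
  | _ n ih =>
    match n with
    | 0 => norm_num [bn, AS]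
    | Nat.succ m =>
      have h1 := bn_recurrence (m+2) (by omega)
      rw [if_neg (by omega : ¬(m+2=1))] at h1
      have h2 : ((∑ k ∈ Finset.range (m+2), ((m+2).choose k : ℚ) * bernoulli k : ℚ) : ℝ) = 0 := by
        rw [sum_bernoulli, if_neg (by omega : ¬(m+2=1))]; norm_num
      push_cast at h2
      rw [Finset.sum_range_succ] at h1 h2
      have h3 : ∑ i ∈ Finset.range (m+1), ((m+2).choose i : ℝ) * bn i
          = ∑ i ∈ Finset.range (m+1), ((m+2).choose i : ℝ) * ((bernoulli i : ℚ) : ℝ) := by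
        apply Finset.sum_congr rfl
        intro i hi
        rw [ih i (by simpa using hi)]
      rw [h3] at h1
      have h4 : ((m+2).choose (m+1) : ℝ) = (m:ℝ)+2 := by
        have : (m+2).choose (m+1) = m+2 := Nat.choose_succ_self_right (m+1)
        rw [this]; push_cast; ring
      rw [h4] at h1 h2
      have h5 : ((m:ℝ)+2) * bn (m+1) = ((m:ℝ)+2) * ((bernoulli (m+1) : ℚ) : ℝ) := by
        linarith
      exact mul_left_cancel₀ (by positivity) h5

/-- `B_n(-a/m) = Σ_{k=0}^{n} k! W̃_{m,a}(n,k) (-1)^k / (m^{n-k} (k+1))`. -/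
theorem bernoulli_eq_sum_ncWhitney (m : ℕ) (hm : 0 < m) (a : ℝ) (n : ℕ) :
    Polynomial.aeval (-a / (m : ℝ)) (Polynomial.bernoulli n) =
      ∑ k ∈ Finset.range (n + 1),
        (Nat.factorial k : ℝ) * ncWhitney m a n k * (-1) ^ k /
          ((m : ℝ) ^ (n - k) * ((k : ℝ) + 1)) := by
  have hm0 : (m:ℝ) ≠ 0 := Nat.cast_ne_zero.mpr hm.ne'
  set x : ℝ := -a / (m:ℝ) with hx
  -- Step A : rewrite the RHS
  have stepA : ∑ k ∈ Finset.range (n + 1),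
        (Nat.factorial k : ℝ) * ncWhitney m a n k * (-1) ^ k /
          ((m : ℝ) ^ (n - k) * ((k : ℝ) + 1))
      = ∑ k ∈ Finset.range (n+1), (1/((k:ℝ)+1)) *
          ∑ j ∈ Finset.range (k+1), (-1:ℝ)^j * (k.choose j : ℝ) * (x + (j:ℝ))^n := by
    apply Finset.sum_congr rfl
    intro k hk
    have hkn : k ≤ n := by simpa [Nat.lt_succ_iff] using Finset.mem_range.mp hk
    have hS : ∑ j ∈ Finset.range (k+1), (-1:ℝ)^(k-j) * (k.choose j : ℝ) * ((m:ℝ)*(j:ℝ) - a)^n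
        = (-1:ℝ)^k * (m:ℝ)^n *
            ∑ j ∈ Finset.range (k+1), (-1:ℝ)^j * (k.choose j : ℝ) * (x + (j:ℝ))^n := by
      rw [Finset.mul_sum]
      apply Finset.sum_congr rfl
      intro j hj
      have hjk : j ≤ k := by simpa [Nat.lt_succ_iff] using Finset.mem_range.mp hj
      have hsign : (-1:ℝ)^(k-j) = (-1:ℝ)^k * (-1:ℝ)^j := by
        have h : k + j = (k - j) + 2*j := by omega
        have : (-1:ℝ)^(k+j) = (-1:ℝ)^(k-j) * ((-1:ℝ)^2)^j := by
          rw [h, pow_add, pow_mul]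
        simp only [neg_one_sq, one_pow, mul_one] at this
        rw [← this, pow_add]
      have hmx : (m:ℝ) * (x + (j:ℝ)) = (m:ℝ)*(j:ℝ) - a := by
        rw [hx]; field_simp; ring
      have hpow : ((m:ℝ)*(j:ℝ) - a)^n = (m:ℝ)^n * (x + (j:ℝ))^n := by
        rw [← mul_pow, hmx]
      rw [hsign, hpow]; ring
    rw [ncWhitney, hS]
    have hsq : ((-1:ℝ)^k) * ((-1:ℝ)^k) = 1 := by
      rw [← pow_add, ← two_mul, pow_mul]; norm_num
    have hmn : (m:ℝ)^k * (m:ℝ)^(n-k) = (m:ℝ)^n := by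
      rw [← pow_add]; congr 1; omega
    have hfac : (k.factorial : ℝ) ≠ 0 := Nat.cast_ne_zero.mpr k.factorial_ne_zero
    have hk1 : ((k:ℝ)+1) ≠ 0 := by positivity
    have hmk : (m:ℝ)^k ≠ 0 := pow_ne_zero _ hm0
    have hmnk : (m:ℝ)^(n-k) ≠ 0 := pow_ne_zero _ hm0
    rw [← hmn]
    set S' := ∑ j ∈ Finset.range (k+1), (-1:ℝ)^j * (k.choose j : ℝ) * (x + (j:ℝ))^n
    field_simp
    linear_combination S' * hsq
  rw [stepA]
  -- Step C : express in terms of bn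
  have stepC : ∑ k ∈ Finset.range (n+1), (1/((k:ℝ)+1)) *
        ∑ j ∈ Finset.range (k+1), (-1:ℝ)^j * (k.choose j : ℝ) * (x + (j:ℝ))^n
      = ∑ i ∈ Finset.range (n+1), (n.choose i : ℝ) * bn i * x^(n-i) := by
    have hpk : ∀ k : ℕ, (1/((k:ℝ)+1)) *
          ∑ j ∈ Finset.range (k+1), (-1:ℝ)^j * (k.choose j : ℝ) * (x + (j:ℝ))^n
        = ∑ i ∈ Finset.range (n+1), (n.choose i : ℝ) * x^(n-i) *
            ((1/((k:ℝ)+1)) * AS i k) := by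
      intro k
      have hexp : ∀ j : ℕ, (x + (j:ℝ))^n
          = ∑ i ∈ Finset.range (n+1), (n.choose i : ℝ) * x^(n-i) * (j:ℝ)^i := by
        intro j
        rw [add_comm x, add_pow]
        apply Finset.sum_congr rfl; intro i _; ring
      simp only [hexp]
      rw [Finset.mul_sum]
      have l : ∀ j ∈ Finset.range (k+1), (1/((k:ℝ)+1)) * ((-1:ℝ)^j * (k.choose j : ℝ) *
            ∑ i ∈ Finset.range (n+1), (n.choose i : ℝ) * x^(n-i) * (j:ℝ)^i)
          = ∑ i ∈ Finset.range (n+1), (n.choose i : ℝ) * x^(n-i) *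
              ((1/((k:ℝ)+1)) * ((-1:ℝ)^j * (k.choose j : ℝ) * (j:ℝ)^i)) := by
        intro j _
        simp only [Finset.mul_sum]
        apply Finset.sum_congr rfl; intro i _; ring
      rw [Finset.sum_congr rfl l, Finset.sum_comm]
      apply Finset.sum_congr rfl
      intro i _
      simp only [AS, Finset.mul_sum]
    rw [Finset.sum_congr rfl (fun k _ => hpk k), Finset.sum_comm]
    apply Finset.sum_congr rfl
    intro i hi
    rw [bn_extend i (n+1) (Finset.mem_range.mp hi), Finset.mul_sum, Finset.sum_mul]
    apply Finset.sum_congr rfl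
    intro k _
    ring
  rw [stepC]
  -- Step B : expand the Bernoulli polynomial
  rw [Polynomial.bernoulli, map_sum]
  apply Finset.sum_congr rfl
  intro i _
  rw [Polynomial.aeval_monomial, bn_eq_bernoulli, eq_ratCast]
  push_cast
  ring
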